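/- For every integer n ≥ 0, Σ_{j=0}^{n} (−1)^j · binom(n+1, n−j) · binom(n+j+1, j) = (−1)^n. -/
import Mathlib

open Finset

lemma aux_diff (n : ℕ) (m : ℕ) (hm : m ≤ n + 1) :
    ∀ t : ℕ, ∑ k ∈ Finset.range (m + 1),
      (-1 : ℤ) ^ k * (m.choose k : ℤ) * ((n + k + t).choose (n + 1) : ℤ)
      = (-1 : ℤ) ^ m * ((n + t).choose (n + 1 - m) : ℤ) := by
  induction m with
  | zero => intro t; simp
  | succ m ih =>
    have hm' : m ≤ n + 1 := by omega
    intro t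
    have key : ∑ k ∈ Finset.range (m + 2),
        (-1 : ℤ) ^ k * ((m+1).choose k : ℤ) * ((n + k + t).choose (n + 1) : ℤ)
        = (∑ k ∈ Finset.range (m + 1),
            (-1 : ℤ) ^ k * (m.choose k : ℤ) * ((n + k + t).choose (n + 1) : ℤ))
          - (∑ k ∈ Finset.range (m + 1),
            (-1 : ℤ) ^ k * (m.choose k : ℤ) * ((n + k + (t+1)).choose (n + 1) : ℤ)) := by
      rw [Finset.sum_range_succ' (fun k => (-1 : ℤ) ^ k * ((m+1).choose k : ℤ) * ((n + k + t).choose (n + 1) : ℤ))]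
      have hsplit : ∀ k : ℕ,
          (-1 : ℤ) ^ (k+1) * ((m+1).choose (k+1) : ℤ) * ((n + (k+1) + t).choose (n + 1) : ℤ)
          = -((-1 : ℤ) ^ k * (m.choose k : ℤ) * ((n + k + (t+1)).choose (n + 1) : ℤ))
            + (-1 : ℤ) ^ (k+1) * (m.choose (k+1) : ℤ) * ((n + (k+1) + t).choose (n + 1) : ℤ) := by
        intro k
        have : n + (k+1) + t = n + k + (t+1) := by ring
        rw [Nat.choose_succ_succ m k, this]
        push_cast
        ring
      rw [Finset.sum_congr rfl (fun k _ => hsplit k), Finset.sum_add_distrib]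
      have h2 : ∑ k ∈ Finset.range (m + 1),
          (-1 : ℤ) ^ (k+1) * (m.choose (k+1) : ℤ) * ((n + (k+1) + t).choose (n + 1) : ℤ)
          = (∑ k ∈ Finset.range (m + 2),
              (-1 : ℤ) ^ k * (m.choose k : ℤ) * ((n + k + t).choose (n + 1) : ℤ))
            - (-1 : ℤ) ^ 0 * (m.choose 0 : ℤ) * ((n + 0 + t).choose (n + 1) : ℤ) := by
        rw [Finset.sum_range_succ' (fun k => (-1 : ℤ) ^ k * (m.choose k : ℤ) * ((n + k + t).choose (n + 1) : ℤ))]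
        ring
      rw [h2, Finset.sum_range_succ (fun k => (-1 : ℤ) ^ k * (m.choose k : ℤ) * ((n + k + t).choose (n + 1) : ℤ))]
      simp [Nat.choose_succ_self]
      ring
    rw [key, ih hm' t, ih hm' (t+1)]
    have h1 : n + 1 - m = (n - m) + 1 := by omega
    have h2 : n + (t+1) = (n + t) + 1 := by ring
    have h3 : n + 1 - (m + 1) = n - m := by omega
    rw [h1, h2, h3, Nat.choose_succ_succ (n+t) (n-m)]
    push_cast
    ring

/-- For every `n ≥ 0`,
`Σ_{j=0}^{n} (−1)^j · binom(n+1, n−j) · binom(n+j+1, j) = (−1)^n` in ℤ. -/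
theorem alternating_binomial_identity (n : ℕ) :
    ∑ j ∈ Finset.range (n + 1),
        (-1 : ℤ) ^ j * ((n + 1).choose (n - j) : ℤ) * ((n + j + 1).choose j : ℤ) =
      (-1 : ℤ) ^ n := by
  have h := aux_diff n (n+1) le_rfl 0
  rw [Finset.sum_range_succ' (fun k => (-1 : ℤ) ^ k * ((n+1).choose k : ℤ) * ((n + k + 0).choose (n + 1) : ℤ))] at h
  simp only [Nat.add_zero, Nat.choose_self, Nat.sub_self, Nat.choose_zero_right] at h
  have hz : ((n).choose (n+1) : ℤ) = 0 := by
    simp [Nat.choose_eq_zero_of_lt (Nat.lt_succ_self n)]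
  rw [hz] at h
  simp only [mul_zero, add_zero, pow_zero, one_mul, mul_one] at h
  have heq : ∀ j ∈ Finset.range (n+1),
      (-1 : ℤ) ^ j * ((n + 1).choose (n - j) : ℤ) * ((n + j + 1).choose j : ℤ)
      = -((-1 : ℤ) ^ (j+1) * ((n+1).choose (j+1) : ℤ) * ((n + (j+1)).choose (n + 1) : ℤ)) := by
    intro j hj
    rw [Finset.mem_range] at hj
    have hj' : j ≤ n := by omega
    have e1 : (n+1).choose (n - j) = (n+1).choose (j+1) := by
      rw [show n - j = (n+1) - (j+1) by omega, Nat.choose_symm (by omega : j + 1 ≤ n + 1)]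
    have e2 : (n + j + 1).choose j = (n + (j+1)).choose (n+1) := by
      rw [show n + (j+1) = n + j + 1 by ring,
        ← Nat.choose_symm (by omega : n + 1 ≤ n + j + 1),
        show n + j + 1 - (n+1) = j by omega]
    rw [e1, e2]
    ring
  rw [Finset.sum_congr rfl heq, Finset.sum_neg_distrib, h]
  simp [pow_succ]
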